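/- Let Σ be a finite alphabet, N ≥ 1, w1 ∈ Σ*, s ∈ Σ^+, w2 an ω-word over Σ, and M, M' natural numbers with M > 2^{N+1} and M' > 2^{N+1}. Then w1·s^M·w2 ≡_N w1·s^{M'}·w2. -/

import Mathlib

namespace Stmt1

variable {Γ : Type*}

/-- `m`-fold concatenation of a finite word. -/
def lpow (u : List Γ) : ℕ → List Γ
  | 0 => []
  | m + 1 => u ++ lpow u m

/-- Concatenation of a finite word with an ω-word. -/
def wcat (u : List Γ) (w : ℕ → Γ) : ℕ → Γ := fun n =>
  if h : n < u.length then u.get ⟨n, h⟩ else w (n - u.length)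

/-- Syntax of first-order logic `FO_Γ` over ω-words over `Γ`:
variables are natural numbers (interpreted as positions), atomic formulas are
`a(z)` for each letter `a`, `S(z,z')`, `z < z'` and `z = z'`,
closed under `¬`, `∧` and `∃`. -/
inductive FO (Γ : Type*) : Type _
  | letter : Γ → ℕ → FO Γ
  | succ : ℕ → ℕ → FO Γ
  | lt : ℕ → ℕ → FO Γ
  | eq : ℕ → ℕ → FO Γ
  | not : FO Γ → FO Γ
  | and : FO Γ → FO Γ → FO Γ
  | ex : ℕ → FO Γ → FO Γ

/-- Satisfaction of an FO formula on an ω-word under an assignment of variables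
to positions. -/
def FO.Sat (w : ℕ → Γ) : FO Γ → (ℕ → ℕ) → Prop
  | .letter a z, f => w (f z) = a
  | .succ z z', f => f z' = f z + 1
  | .lt z z', f => f z < f z'
  | .eq z z', f => f z = f z'
  | .not φ, f => ¬ FO.Sat w φ f
  | .and φ ψ, f => FO.Sat w φ f ∧ FO.Sat w ψ f
  | .ex z φ, f => ∃ pos : ℕ, FO.Sat w φ (Function.update f z pos)

/-- Quantifier height: maximal nesting depth of `∃`. -/
def FO.qh : FO Γ → ℕ
  | .letter _ _ => 0
  | .succ _ _ => 0
  | .lt _ _ => 0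
  | .eq _ _ => 0
  | .not φ => FO.qh φ
  | .and φ ψ => max (FO.qh φ) (FO.qh ψ)
  | .ex _ φ => FO.qh φ + 1

/-- Free variables of an FO formula. -/
def FO.free : FO Γ → Finset ℕ
  | .letter _ z => {z}
  | .succ z z' => {z, z'}
  | .lt z z' => {z, z'}
  | .eq z z' => {z, z'}
  | .not φ => FO.free φ
  | .and φ ψ => FO.free φ ∪ FO.free ψ
  | .ex z φ => (FO.free φ).erase z

/-- Satisfaction of a sentence (the assignment is irrelevant, so we fix one). -/
def FO.SatS (w : ℕ → Γ) (φ : FO Γ) : Prop := FO.Sat w φ fun _ => 0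

/-- `w ≡_n w'`: the two ω-words satisfy exactly the same FO sentences
of quantifier height at most `n`. -/
def FOEquiv (n : ℕ) (w w' : ℕ → Γ) : Prop :=
  ∀ φ : FO Γ, FO.free φ = ∅ → FO.qh φ ≤ n → (FO.SatS w φ ↔ FO.SatS w' φ)

/-! ### Auxiliary machinery: an Ehrenfeucht–Fraïssé style argument. -/

lemma lpow_length (u : List Γ) (m : ℕ) : (lpow u m).length = m * u.length := by
  induction m with
  | zero => simp [lpow]
  | succ n ih => simp [lpow, ih]; ring

lemma lpow_getElem (s : List Γ) (hp : 0 < s.length) (m : ℕ) :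
    ∀ i, (h : i < (lpow s m).length) →
      (lpow s m)[i] = s[i % s.length]'(Nat.mod_lt _ hp) := by
  induction m with
  | zero => intro i h; simp [lpow] at h
  | succ n ih =>
    intro i h
    show (s ++ lpow s n)[i]'(by simpa [lpow] using h) = _
    by_cases hi : i < s.length
    · rw [List.getElem_append_left hi]
      have : i % s.length = i := Nat.mod_eq_of_lt hi
      exact (getElem_congr rfl this.symm ..)
    · push_neg at hi
      rw [List.getElem_append_right hi]
      rw [ih (i - s.length) (by simp [lpow, lpow_length] at h ⊢; omega)]
      have : (i - s.length) % s.length = i % s.length := (Nat.mod_eq_sub_mod hi).symm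
      exact (getElem_congr rfl this ..)

lemma wcat_lt {u : List Γ} {w : ℕ → Γ} {n : ℕ} (h : n < u.length) :
    wcat u w n = u[n] := by simp [wcat, h]

lemma wcat_ge {u : List Γ} {w : ℕ → Γ} {n : ℕ} (h : u.length ≤ n) :
    wcat u w n = w (n - u.length) := by
  simp [wcat, Nat.not_lt.mpr h]

/-- The pairwise compatibility relation between a pair of positions `(a,b)`
(position `a` in the first word matched with `b` in the second) and another
pair `(a',b')`: either exactly aligned (the same difference), or separated by a
gap `> g` in both words, in the same direction. -/
def P (g a b a' b' : ℕ) : Prop :=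
  ((b' : ℤ) - b = (a' : ℤ) - a) ∨
  (a + g < a' ∧ b + g < b') ∨
  (a' + g < a ∧ b' + g < b)

lemma P_mono {g g' : ℕ} (hgg : g' ≤ g) {a b a' b'} (h : P g a b a' b') : P g' a b a' b' := by
  rcases h with h | h | h
  exacts [Or.inl h, Or.inr (Or.inl ⟨by omega, by omega⟩), Or.inr (Or.inr ⟨by omega, by omega⟩)]

lemma P_symm {g a b a' b'} (h : P g a b a' b') : P g a' b' a b := by
  rcases h with h | h | h
  exacts [Or.inl (by omega), Or.inr (Or.inr h), Or.inr (Or.inl h)]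

lemma P_swap {g a b a' b'} (h : P g a b a' b') : P g b a b' a' := by
  rcases h with h | h | h
  exacts [Or.inl (by omega), Or.inr (Or.inl ⟨h.2, h.1⟩), Or.inr (Or.inr ⟨h.2, h.1⟩)]

/-- The key extension lemma ("duplicator has a response"). -/
lemma ext_lemma (p g : ℕ) (hp : 0 < p) (Λ : ℕ → ℕ → Prop) (B B' : ℕ)
    (hfam : ∀ t : ℕ, Λ (B + t) (B' + t)) (h0 : Λ 0 0)
    (hdvd : ∀ a b, Λ a b → (p : ℤ) ∣ (b : ℤ) - a)
    (hP : ∀ a b a' b', Λ a b → Λ a' b' → P (2 * g + p) a b a' b') (a : ℕ) :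
    ∃ b : ℕ, ((p : ℤ) ∣ (b : ℤ) - (a : ℤ)) ∧ ∀ a' b', Λ a' b' → P g a b a' b' := by
  by_cases hnear : ∃ α β, Λ α β ∧ α ≤ a + (g + p) ∧ a ≤ α + (g + p)
  · obtain ⟨α, β, hαβ, h1, h2⟩ := hnear
    have hnn : (0 : ℤ) ≤ (β : ℤ) + a - α := by
      rcases hP α β 0 0 hαβ h0 with h | h | h <;> omega
    set b : ℕ := ((β : ℤ) + a - α).toNat with hbdef
    have hb : (b : ℤ) = (β : ℤ) + a - α := Int.toNat_of_nonneg hnn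
    refine ⟨b, ?_, ?_⟩
    · have h3 : (b : ℤ) - a = (β : ℤ) - α := by omega
      rw [h3]; exact hdvd α β hαβ
    · intro a' b' hq
      rcases hP α β a' b' hαβ hq with h | h | h
      · exact Or.inl (by omega)
      · exact Or.inr (Or.inl ⟨by omega, by omega⟩)
      · exact Or.inr (Or.inr ⟨by omega, by omega⟩)
  · push_neg at hnear
    have hfar : ∀ α β, Λ α β → a + (g + p) < α ∨ α + (g + p) < a := by
      intro α β hq
      by_cases hc : α ≤ a + (g + p)
      · exact Or.inr (hnear α β hq hc)
      · exact Or.inl (by omega)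
    have ha0 : g + p < a := by rcases hfar 0 0 h0 with h | h <;> omega
    set S0 : Set ℕ := {α : ℕ | α < a ∧ ∃ β, Λ α β} with hS0def
    have hS0ne : S0.Nonempty := ⟨0, by omega, 0, h0⟩
    have hS0bdd : BddAbove S0 := ⟨a, fun x hx => le_of_lt hx.1⟩
    have hm0 := Nat.sSup_mem hS0ne hS0bdd
    obtain ⟨hα₀lt, β₀, hβ₀⟩ := hm0
    set α₀ : ℕ := sSup S0 with hα₀def
    set S1 : Set ℕ := {α : ℕ | a < α ∧ ∃ β, Λ α β} with hS1def
    have hS1ne : S1.Nonempty := ⟨B + (a + 1), by omega, B' + (a + 1), hfam (a + 1)⟩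
    have hm1 := Nat.sInf_mem hS1ne
    obtain ⟨hα₁gt, β₁, hβ₁⟩ := hm1
    set α₁ : ℕ := sInf S1 with hα₁def
    have hg0 : α₀ + (g + p) < a := by rcases hfar α₀ β₀ hβ₀ with h | h <;> omega
    have hg1 : a + (g + p) < α₁ := by rcases hfar α₁ β₁ hβ₁ with h | h <;> omega
    have hwin : (β₀ : ℤ) + (2 * g + p) < β₁ := by
      rcases hP α₀ β₀ α₁ β₁ hβ₀ hβ₁ with h | h | h <;> omega
    set r : ℤ := ((a : ℤ) - ((β₀ : ℤ) + g + 1)) % p with hrdef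
    have hr0 : 0 ≤ r := Int.emod_nonneg _ (by exact_mod_cast hp.ne')
    have hrp : r < p := Int.emod_lt_of_pos _ (by exact_mod_cast hp)
    have hc0 : (0 : ℤ) ≤ (β₀ : ℤ) + g + 1 + r := by omega
    set b : ℕ := ((β₀ : ℤ) + g + 1 + r).toNat with hbdef
    have hb : (b : ℤ) = (β₀ : ℤ) + g + 1 + r := Int.toNat_of_nonneg hc0
    refine ⟨b, ?_, ?_⟩
    · have hdm := Int.mul_ediv_add_emod ((a : ℤ) - ((β₀ : ℤ) + g + 1)) p
      refine ⟨-(((a : ℤ) - ((β₀ : ℤ) + g + 1)) / p), ?_⟩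
      have h5 : (p : ℤ) * (((a : ℤ) - ((β₀ : ℤ) + g + 1)) / p) + r
          = (a : ℤ) - ((β₀ : ℤ) + g + 1) := hdm
      rw [mul_neg]
      omega
    · intro a' b' hq
      rcases hfar a' b' hq with hgt | hlt
      · have hle : α₁ ≤ a' := Nat.sInf_le ⟨by omega, b', hq⟩
        rcases hP α₁ β₁ a' b' hβ₁ hq with h | h | h
        · exact Or.inr (Or.inl ⟨by omega, by omega⟩)
        · exact Or.inr (Or.inl ⟨by omega, by omega⟩)
        · exact Or.inr (Or.inl ⟨by omega, by omega⟩)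
      · have hle : a' ≤ α₀ := le_csSup hS0bdd ⟨by omega, b', hq⟩
        rcases hP a' b' α₀ β₀ hq hβ₀ with h | h | h
        · exact Or.inr (Or.inr ⟨by omega, by omega⟩)
        · exact Or.inr (Or.inr ⟨by omega, by omega⟩)
        · exact Or.inr (Or.inr ⟨by omega, by omega⟩)

/-- The anchor system: matched pebble pairs, the common prefix (`x ≤ L`
matched with itself) and the common suffix (`A + t` matched with `A' + t`). -/
def anch (L A A' : ℕ) (f f' : ℕ → ℕ) (a b : ℕ) : Prop :=
  (∃ z, f z = a ∧ f' z = b) ∨ (a ≤ L ∧ b = a) ∨ (∃ t, a = A + t ∧ b = A' + t)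

/-- The duplicator's invariant. -/
def Inv (p g L A A' : ℕ) (f f' : ℕ → ℕ) : Prop :=
  (∀ a b, anch L A A' f f' a b → (p : ℤ) ∣ (b : ℤ) - a) ∧
  (∀ a b a' b', anch L A A' f f' a b → anch L A A' f f' a' b' → P g a b a' b')

lemma anch_swap {L A A' : ℕ} {f f' : ℕ → ℕ} {a b : ℕ}
    (h : anch L A A' f f' a b) : anch L A' A f' f b a := by
  rcases h with ⟨z, h1, h2⟩ | ⟨h1, h2⟩ | ⟨t, h1, h2⟩
  · exact Or.inl ⟨z, h2, h1⟩
  · exact Or.inr (Or.inl ⟨by omega, by omega⟩)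
  · exact Or.inr (Or.inr ⟨t, h2, h1⟩)

lemma Inv_swap {p g L A A' : ℕ} {f f' : ℕ → ℕ}
    (h : Inv p g L A A' f f') : Inv p g L A' A f' f := by
  refine ⟨fun a b hab => ?_,
    fun a b a' b' h1 h2 => P_swap (h.2 _ _ _ _ (anch_swap h1) (anch_swap h2))⟩
  obtain ⟨c, hc⟩ := h.1 b a (anch_swap hab)
  exact ⟨-c, by rw [mul_neg]; omega⟩

lemma step {p g L A A' : ℕ} (hp : 0 < p) {f f' : ℕ → ℕ}
    (h : Inv p (2 * g + p) L A A' f f') (z a : ℕ) :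
    ∃ b, Inv p g L A A' (Function.update f z a) (Function.update f' z b) := by
  obtain ⟨b, hdvd, hPb⟩ := ext_lemma p g hp (anch L A A' f f') A A'
    (fun t => Or.inr (Or.inr ⟨t, rfl, rfl⟩)) (Or.inr (Or.inl ⟨Nat.zero_le _, rfl⟩))
    h.1 h.2 a
  have hsub : ∀ x y, anch L A A' (Function.update f z a) (Function.update f' z b) x y →
      (x = a ∧ y = b) ∨ anch L A A' f f' x y := by
    intro x y hxy
    rcases hxy with ⟨z₂, h1, h2⟩ | hxy | hxy
    · by_cases hz : z₂ = z
      · subst hz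
        rw [Function.update_self] at h1 h2
        exact Or.inl ⟨h1.symm, h2.symm⟩
      · rw [Function.update_of_ne hz] at h1 h2
        exact Or.inr (Or.inl ⟨z₂, h1, h2⟩)
    · exact Or.inr (Or.inr (Or.inl hxy))
    · exact Or.inr (Or.inr (Or.inr hxy))
  refine ⟨b, fun x y hxy => ?_, fun x y x' y' h1 h2 => ?_⟩
  · rcases hsub x y hxy with ⟨rfl, rfl⟩ | hxy
    · exact hdvd
    · exact h.1 x y hxy
  · rcases hsub x y h1 with ⟨rfl, rfl⟩ | hx <;> rcases hsub x' y' h2 with ⟨rfl, rfl⟩ | hy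
    · exact Or.inl (by omega)
    · exact hPb _ _ hy
    · exact P_symm (hPb _ _ hx)
    · exact P_mono (by omega) (h.2 _ _ _ _ hx hy)

/-- Equal letters on matched positions. -/
lemma letter_eq (w1 s : List Γ) (hs : s ≠ []) (w2 : ℕ → Γ) (M M' : ℕ) (a b : ℕ)
    (hdvd : (s.length : ℤ) ∣ (b : ℤ) - a)
    (hwall : ∀ x ≤ w1.length, P s.length a b x x)
    (hfam : ∀ t, P s.length a b (w1.length + M * s.length + t)
      (w1.length + M' * s.length + t)) :
    wcat (w1 ++ lpow s M) w2 a = wcat (w1 ++ lpow s M') w2 b := by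
  have hp : 0 < s.length := List.length_pos_iff.mpr hs
  have hlen : (w1 ++ lpow s M).length = w1.length + M * s.length := by
    simp [lpow_length]
  have hlen' : (w1 ++ lpow s M').length = w1.length + M' * s.length := by
    simp [lpow_length]
  rcases lt_or_ge a w1.length with hA | hL
  · have hba : b = a := by rcases hwall a (le_of_lt hA) with h | h | h <;> omega
    subst hba
    rw [wcat_lt (by omega), wcat_lt (by omega)]
    rw [List.getElem_append_left hA, List.getElem_append_left hA]
  rcases lt_or_ge a (w1.length + M * s.length) with hmid | hbig
  · have hbL : w1.length ≤ b := by rcases hwall w1.length le_rfl with h | h | h <;> omega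
    have hbA' : b < w1.length + M' * s.length := by
      rcases hfam 0 with h | h | h <;> omega
    rw [wcat_lt (by omega), wcat_lt (by omega)]
    rw [List.getElem_append_right (by omega), List.getElem_append_right (by omega)]
    rw [lpow_getElem s hp M _ (by rw [lpow_length]; omega),
      lpow_getElem s hp M' _ (by rw [lpow_length]; omega)]
    have hmod : (a - w1.length) % s.length = (b - w1.length) % s.length := by
      obtain ⟨c, hc⟩ := hdvd
      set pc : ℤ := (s.length : ℤ) * c with hpc
      have h1 : ((b - w1.length : ℕ) : ℤ) = ((a - w1.length : ℕ) : ℤ) + pc := by omega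
      have h2 : ((a - w1.length : ℕ) : ℤ) % s.length = ((b - w1.length : ℕ) : ℤ) % s.length := by
        rw [h1, hpc, Int.add_mul_emod_self_left]
      exact_mod_cast h2
    exact getElem_congr rfl hmod ..
  · have hb : b = w1.length + M' * s.length + (a - (w1.length + M * s.length)) := by
      rcases hfam (a - (w1.length + M * s.length)) with h | h | h <;> omega
    rw [wcat_ge (by omega), wcat_ge (by omega)]
    rw [hlen, hlen']
    congr 1
    omega

/-- Main lemma: the invariant at level `k` implies agreement on formulas of
quantifier height at most `k`. -/
lemma sat_iff (w1 s : List Γ) (hs : s ≠ []) (w2 : ℕ → Γ) (M M' : ℕ) (φ : FO Γ) :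
    ∀ (k : ℕ) (f f' : ℕ → ℕ), FO.qh φ ≤ k →
      Inv s.length ((2 ^ (k + 1) - 1) * s.length) w1.length
        (w1.length + M * s.length) (w1.length + M' * s.length) f f' →
      (FO.Sat (wcat (w1 ++ lpow s M) w2) φ f ↔
        FO.Sat (wcat (w1 ++ lpow s M') w2) φ f') := by
  have hp : 0 < s.length := List.length_pos_iff.mpr hs
  have hgpos : ∀ k : ℕ, 1 ≤ 2 ^ (k + 1) - 1 := by
    intro k
    have : 2 ≤ 2 ^ (k + 1) := by
      calc 2 = 2 ^ 1 := rfl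
      _ ≤ 2 ^ (k + 1) := Nat.pow_le_pow_right (by omega) (by omega)
    omega
  have hpg : ∀ k : ℕ, s.length ≤ (2 ^ (k + 1) - 1) * s.length := fun k =>
    le_mul_of_one_le_left (Nat.zero_le _) (hgpos k)
  have h1g : ∀ k : ℕ, 1 ≤ (2 ^ (k + 1) - 1) * s.length := fun k =>
    le_trans hp (hpg k)
  induction φ with
  | letter c z =>
    intro k f f' _ h
    have hpeb : anch w1.length (w1.length + M * s.length) (w1.length + M' * s.length)
        f f' (f z) (f' z) := Or.inl ⟨z, rfl, rfl⟩
    have heq : wcat (w1 ++ lpow s M) w2 (f z) = wcat (w1 ++ lpow s M') w2 (f' z) := by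
      refine letter_eq w1 s hs w2 M M' (f z) (f' z) (h.1 _ _ hpeb) ?_ ?_
      · exact fun x hx => P_mono (hpg k)
          (h.2 _ _ _ _ hpeb (Or.inr (Or.inl ⟨hx, rfl⟩)))
      · exact fun t => P_mono (hpg k)
          (h.2 _ _ _ _ hpeb (Or.inr (Or.inr ⟨t, rfl, rfl⟩)))
    simp only [FO.Sat]
    rw [heq]
  | succ z z' =>
    intro k f f' _ h
    have hP := P_mono (h1g k) (h.2 _ _ _ _ (Or.inl ⟨z, rfl, rfl⟩) (Or.inl ⟨z', rfl, rfl⟩))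
    simp only [FO.Sat]
    rcases hP with h' | h' | h' <;> constructor <;> intro hx <;> omega
  | lt z z' =>
    intro k f f' _ h
    have hP := P_mono (h1g k) (h.2 _ _ _ _ (Or.inl ⟨z, rfl, rfl⟩) (Or.inl ⟨z', rfl, rfl⟩))
    simp only [FO.Sat]
    rcases hP with h' | h' | h' <;> constructor <;> intro hx <;> omega
  | eq z z' =>
    intro k f f' _ h
    have hP := P_mono (h1g k) (h.2 _ _ _ _ (Or.inl ⟨z, rfl, rfl⟩) (Or.inl ⟨z', rfl, rfl⟩))
    simp only [FO.Sat]
    rcases hP with h' | h' | h' <;> constructor <;> intro hx <;> omega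
  | not φ ih =>
    intro k f f' hqh h
    simp only [FO.qh] at hqh
    simp only [FO.Sat]
    exact not_congr (ih k f f' hqh h)
  | and φ ψ ihφ ihψ =>
    intro k f f' hqh h
    simp only [FO.qh] at hqh
    simp only [FO.Sat]
    exact and_congr (ihφ k f f' (le_trans (le_max_left _ _) hqh) h)
      (ihψ k f f' (le_trans (le_max_right _ _) hqh) h)
  | ex z φ ih =>
    intro k f f' hqh h
    simp only [FO.qh] at hqh
    obtain ⟨m, rfl⟩ : ∃ m, k = m + 1 := ⟨k - 1, by omega⟩
    have hqφ : FO.qh φ ≤ m := by omega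
    have hg : (2 ^ (m + 1 + 1) - 1) * s.length
        = 2 * ((2 ^ (m + 1) - 1) * s.length) + s.length := by
      obtain ⟨q, hq⟩ : ∃ q, 2 ^ (m + 1) = q + 1 :=
        ⟨2 ^ (m + 1) - 1, by have := hgpos m; omega⟩
      rw [pow_succ, hq]
      rw [show (q + 1) * 2 - 1 = 2 * q + 1 by omega, show q + 1 - 1 = q from rfl]
      ring
    rw [hg] at h
    simp only [FO.Sat]
    constructor
    · rintro ⟨pos, hpos⟩
      obtain ⟨b, hInv⟩ := step hp h z pos
      exact ⟨b, (ih m _ _ hqφ hInv).mp hpos⟩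
    · rintro ⟨pos, hpos⟩
      obtain ⟨b, hInv⟩ := step hp (Inv_swap h) z pos
      exact ⟨b, (ih m _ _ hqφ (Inv_swap hInv)).mpr hpos⟩

/-- Stuttering theorem for FO: if `M, M' > 2^(N+1)` then
`w1 · s^M · w2 ≡_N w1 · s^(M') · w2`. -/
theorem stuttering_fo' {Γ : Type*} [Fintype Γ] (N : ℕ) (hN : 1 ≤ N)
    (w1 s : List Γ) (hs : s ≠ []) (w2 : ℕ → Γ) (M M' : ℕ)
    (hM : 2 ^ (N + 1) < M) (hM' : 2 ^ (N + 1) < M') :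
    FOEquiv N (wcat (w1 ++ lpow s M) w2) (wcat (w1 ++ lpow s M') w2) := by
  intro φ _ hqh
  have hp : 0 < s.length := List.length_pos_iff.mpr hs
  refine sat_iff w1 s hs w2 M M' φ N (fun _ => 0) (fun _ => 0) hqh ⟨?_, ?_⟩
  · intro a b hab
    rcases hab with ⟨z, h1, h2⟩ | ⟨h1, h2⟩ | ⟨t, h1, h2⟩
    · simp only at h1 h2
      subst h1; subst h2
      simp
    · subst h2; simp
    · subst h1; subst h2
      exact ⟨(M' : ℤ) - M, by push_cast; ring⟩
  · have hMN : (2 ^ (N + 1) - 1) * s.length < M * s.length :=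
      (Nat.mul_lt_mul_right hp).mpr (lt_of_le_of_lt (Nat.sub_le _ _) hM)
    have hMN' : (2 ^ (N + 1) - 1) * s.length < M' * s.length :=
      (Nat.mul_lt_mul_right hp).mpr (lt_of_le_of_lt (Nat.sub_le _ _) hM')
    intro a b a' b' h1 h2
    rcases h1 with ⟨z, hz1, hz2⟩ | ⟨hx1, hx2⟩ | ⟨t, ht1, ht2⟩ <;>
      rcases h2 with ⟨z', hz1', hz2'⟩ | ⟨hx1', hx2'⟩ | ⟨t', ht1', ht2'⟩
    · simp only at hz1 hz2 hz1' hz2'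
      exact Or.inl (by omega)
    · simp only at hz1 hz2
      exact Or.inl (by omega)
    · simp only at hz1 hz2
      exact Or.inr (Or.inl ⟨by omega, by omega⟩)
    · simp only at hz1' hz2'
      exact Or.inl (by omega)
    · exact Or.inl (by omega)
    · exact Or.inr (Or.inl ⟨by omega, by omega⟩)
    · simp only at hz1' hz2'
      exact Or.inr (Or.inr ⟨by omega, by omega⟩)
    · exact Or.inr (Or.inr ⟨by omega, by omega⟩)
    · exact Or.inl (by omega)

end Stmt1
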